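/- Let α ∈ (0,1) and let t ≥ 0 be real. Then: (i) ∫_{ℝ≥0} α^(max(s,t)) ds = (t − 1/ln α) · α^t; (ii) for every γ ∈ (0, α^(−1/2)) with γ ≠ 1, ∫_{ℝ≥0} α^(max(s,t)) · γ^(|s−t|) ds = −((1 − γ^t)/ln γ + 1/ln(αγ)) · α^t; (iii) ∫_{ℝ≥0} (α^(max(s,t)+s+t) − (1/3)·α^(3·max(s,t))) ds = ((11/(18 ln α))·α^t − 1/ln α − t·α^t/3) · α^(2t). -/

import Mathlib

open MeasureTheory Set

lemma cont_const_rpow {c : ℝ} (hc : 0 < c) {g : ℝ → ℝ} (hg : Continuous g) :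
    Continuous (fun s => c ^ g s) := by
  have : (fun s => c ^ g s) = fun s => Real.exp (g s * Real.log c) := by
    funext s; rw [Real.rpow_def_of_pos hc, mul_comm]
  rw [this]; exact Real.continuous_exp.comp (hg.mul continuous_const)

lemma rpow_intOn_Ioi {c : ℝ} (hc0 : 0 < c) (hc1 : c < 1) (a : ℝ) :
    IntegrableOn (fun s : ℝ => c ^ s) (Ioi a) := by
  have h : (fun s : ℝ => c ^ s) = fun s => Real.exp (-(-Real.log c) * s) := by
    funext s; rw [neg_neg, Real.rpow_def_of_pos hc0]
  rw [h]
  exact exp_neg_integrableOn_Ioi a (by simpa using Real.log_neg hc0 hc1)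

lemma rpow_tendsto {c : ℝ} (hc0 : 0 < c) (hc1 : c < 1) :
    Filter.Tendsto (fun s : ℝ => c ^ s) Filter.atTop (nhds 0) := by
  have h : (fun s : ℝ => c ^ s) = fun s => Real.exp (s * Real.log c) := by
    funext s; rw [Real.rpow_def_of_pos hc0, mul_comm]
  rw [h]
  apply Real.tendsto_exp_atBot.comp
  exact Filter.Tendsto.atTop_mul_const_of_neg (Real.log_neg hc0 hc1) Filter.tendsto_id

lemma integral_rpow_Ioi {c : ℝ} (hc0 : 0 < c) (hc1 : c < 1) (a : ℝ) :
    ∫ s in Ioi a, c ^ s = -(c ^ a) / Real.log c := by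
  have hlog : Real.log c < 0 := Real.log_neg hc0 hc1
  have hd : ∀ x ∈ Ioi a, HasDerivAt (fun s => c ^ s / Real.log c) (c ^ x) x := by
    intro x _
    have := ((Real.hasStrictDerivAt_const_rpow hc0 x).hasDerivAt).div_const (Real.log c)
    simpa [mul_div_assoc, mul_div_cancel_right₀ _ hlog.ne] using this
  have hcont : ContinuousWithinAt (fun s => c ^ s / Real.log c) (Ici a) a :=
    (((cont_const_rpow hc0 continuous_id).div_const _).continuousWithinAt)
  have htend : Filter.Tendsto (fun s : ℝ => c ^ s / Real.log c) Filter.atTop (nhds 0) := by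
    simpa using (rpow_tendsto hc0 hc1).div_const (Real.log c)
  have h2 : ∫ s in Ioi a, c ^ s = 0 - c ^ a / Real.log c :=
    integral_Ioi_of_hasDerivAt_of_tendsto hcont hd (rpow_intOn_Ioi hc0 hc1 a) htend
  rw [h2]; ring

lemma integral_rpow_ival {c : ℝ} (hc0 : 0 < c) (hc1 : c ≠ 1) (a b : ℝ) :
    ∫ s in a..b, c ^ s = (c ^ b - c ^ a) / Real.log c := by
  have hlog : Real.log c ≠ 0 := by
    intro h
    rcases Real.log_eq_zero.mp h with h|h|h <;> [linarith; exact hc1 h; linarith]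
  have hd : ∀ x ∈ Set.uIcc a b, HasDerivAt (fun s => c ^ s / Real.log c) (c ^ x) x := by
    intro x _
    have := ((Real.hasStrictDerivAt_const_rpow hc0 x).hasDerivAt).div_const (Real.log c)
    simpa [mul_div_assoc, mul_div_cancel_right₀ _ hlog] using this
  have := intervalIntegral.integral_eq_sub_of_hasDerivAt hd
    ((cont_const_rpow hc0 continuous_id).intervalIntegrable a b)
  rw [this]; ring

lemma split_Ici {t : ℝ} (ht : 0 ≤ t) {f : ℝ → ℝ} (hc : Continuous f)
    (hi : IntegrableOn f (Ioi t)) :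
    ∫ s in Ici (0:ℝ), f s = (∫ s in (0:ℝ)..t, f s) + ∫ s in Ioi t, f s := by
  rw [integral_Ici_eq_integral_Ioi, ← Set.Ioc_union_Ioi_eq_Ioi ht,
    setIntegral_union (Set.Ioc_disjoint_Ioi le_rfl) measurableSet_Ioi
      (hc.integrableOn_Ioc) hi,
    intervalIntegral.integral_of_le ht]


/-- Steady-state gain representers `φ₀(t)` for the continuous-time TC, DC
and SS kernels:
(i) `∫_{ℝ≥0} α^(max(s,t)) ds = (t − 1/ln α)·α^t`;
(ii) `∫_{ℝ≥0} α^(max(s,t))·γ^|s−t| ds = −((1 − γ^t)/ln γ + 1/ln(αγ))·α^t`;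
(iii) `∫_{ℝ≥0} (α^(max(s,t)+s+t) − (1/3)α^(3 max(s,t))) ds
        = ((11/(18 ln α))·α^t − 1/ln α − t·α^t/3)·α^(2t)`. -/
theorem phi0_TC_DC_SS_continuous
    (α : ℝ) (hα : α ∈ Set.Ioo (0 : ℝ) 1) (t : ℝ) (ht : 0 ≤ t) :
    (∫ s in Set.Ici (0 : ℝ), α ^ max s t = (t - 1 / Real.log α) * α ^ t) ∧
    (∀ γ : ℝ, γ ∈ Set.Ioo (0 : ℝ) (α ^ (-1/2 : ℝ)) → γ ≠ 1 →
      ∫ s in Set.Ici (0 : ℝ), α ^ max s t * γ ^ |s - t| =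
        -((1 - γ ^ t) / Real.log γ + 1 / Real.log (α * γ)) * α ^ t) ∧
    (∫ s in Set.Ici (0 : ℝ), (α ^ (max s t + s + t) - (1/3) * α ^ (3 * max s t)) =
      ((11 / (18 * Real.log α)) * α ^ t - 1 / Real.log α - t * α ^ t / 3) *
        α ^ (2 * t)) := by
  obtain ⟨hα0, hα1⟩ := hα
  have hlogα : Real.log α < 0 := Real.log_neg hα0 hα1
  have huIcc : Set.uIcc (0:ℝ) t = Set.Icc 0 t := Set.uIcc_of_le ht
  refine ⟨?_, ?_, ?_⟩
  · -- Part (i)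
    have hf : Continuous (fun s : ℝ => α ^ max s t) :=
      cont_const_rpow hα0 (continuous_id.max continuous_const)
    have heq : Set.EqOn (fun s : ℝ => α ^ s) (fun s : ℝ => α ^ max s t) (Ioi t) := by
      intro s hs; simp [max_eq_left (le_of_lt (Set.mem_Ioi.mp hs))]
    have hint : IntegrableOn (fun s : ℝ => α ^ max s t) (Ioi t) :=
      (rpow_intOn_Ioi hα0 hα1 t).congr_fun heq measurableSet_Ioi
    rw [split_Ici ht hf hint]
    have hIoi : ∫ s in Ioi t, α ^ max s t = -(α ^ t)/Real.log α := by
      rw [← setIntegral_congr_fun measurableSet_Ioi heq, integral_rpow_Ioi hα0 hα1]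
    have hIcc : ∫ s in (0:ℝ)..t, α ^ max s t = t * α ^ t := by
      have : ∫ s in (0:ℝ)..t, α ^ max s t = ∫ _ in (0:ℝ)..t, α ^ t := by
        apply intervalIntegral.integral_congr
        intro s hs
        rw [huIcc] at hs
        simp [max_eq_right hs.2]
      rw [this, intervalIntegral.integral_const, smul_eq_mul]
      ring
    rw [hIoi, hIcc]
    field_simp [hlogα.ne]
    ring
  · -- Part (ii)
    intro γ hγ hγ1
    obtain ⟨hγ0, hγlt⟩ := hγ
    have hαγ0 : 0 < α * γ := mul_pos hα0 hγ0
    have hαγ1 : α * γ < 1 := by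
      have h2 : α * γ < α * α ^ (-1/2:ℝ) := mul_lt_mul_of_pos_left hγlt hα0
      have h3 : α * α ^ (-1/2:ℝ) = α ^ (1/2:ℝ) := by
        nth_rewrite 1 [← Real.rpow_one α]
        rw [← Real.rpow_add hα0]; norm_num
      have h4 : α ^ (1/2:ℝ) < 1 := Real.rpow_lt_one hα0.le hα1 (by norm_num)
      linarith
    have hlogγ : Real.log γ ≠ 0 := by
      intro h
      rcases Real.log_eq_zero.mp h with h|h|h <;> [linarith; exact hγ1 h; linarith]
    have hlogαγ : Real.log (α*γ) ≠ 0 := (Real.log_neg hαγ0 hαγ1).ne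
    have hf : Continuous (fun s : ℝ => α ^ max s t * γ ^ |s - t|) :=
      (cont_const_rpow hα0 (continuous_id.max continuous_const)).mul
        (cont_const_rpow hγ0 (continuous_id.sub continuous_const).abs)
    have hγt : (0:ℝ) < γ ^ t := Real.rpow_pos_of_pos hγ0 t
    have heq : Set.EqOn (fun s : ℝ => (α*γ) ^ s / γ ^ t)
        (fun s : ℝ => α ^ max s t * γ ^ |s - t|) (Ioi t) := by
      intro s hs
      have hst : t < s := hs
      simp only
      rw [max_eq_left hst.le, abs_of_pos (by linarith : (0:ℝ) < s - t),
        Real.rpow_sub hγ0, Real.mul_rpow hα0.le hγ0.le]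
      ring
    have hint : IntegrableOn (fun s : ℝ => α ^ max s t * γ ^ |s - t|) (Ioi t) :=
      IntegrableOn.congr_fun ((rpow_intOn_Ioi hαγ0 hαγ1 t).div_const _) heq measurableSet_Ioi
    rw [split_Ici ht hf hint]
    have hIoi : ∫ s in Ioi t, α ^ max s t * γ ^ |s - t| = -(α ^ t)/Real.log (α*γ) := by
      rw [← setIntegral_congr_fun measurableSet_Ioi heq, integral_div,
        integral_rpow_Ioi hαγ0 hαγ1, Real.mul_rpow hα0.le hγ0.le]
      field_simp
    have hIcc : ∫ s in (0:ℝ)..t, α ^ max s t * γ ^ |s - t|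
        = α ^ t * ((γ ^ t - 1)/Real.log γ) := by
      have h1 : ∫ s in (0:ℝ)..t, α ^ max s t * γ ^ |s - t|
          = ∫ s in (0:ℝ)..t, α ^ t * γ ^ (t - s) := by
        apply intervalIntegral.integral_congr
        intro s hs
        rw [huIcc] at hs
        simp only [max_eq_right hs.2, abs_of_nonpos (show s - t ≤ 0 by linarith [hs.2]),
          neg_sub]
      rw [h1, intervalIntegral.integral_const_mul,
        intervalIntegral.integral_comp_sub_left (fun x => γ ^ x) t]
      simp only [sub_self, sub_zero]
      rw [integral_rpow_ival hγ0 hγ1, Real.rpow_zero]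
    rw [hIoi, hIcc]
    field_simp [hlogγ, hlogαγ]
    ring
  · -- Part (iii)
    set A2 := α ^ (2:ℝ) with hA2def
    set A3 := α ^ (3:ℝ) with hA3def
    have hA20 : 0 < A2 := Real.rpow_pos_of_pos hα0 _
    have hA21 : A2 < 1 := Real.rpow_lt_one hα0.le hα1 (by norm_num)
    have hA30 : 0 < A3 := Real.rpow_pos_of_pos hα0 _
    have hA31 : A3 < 1 := Real.rpow_lt_one hα0.le hα1 (by norm_num)
    have hlogA2 : Real.log A2 = 2 * Real.log α := by rw [hA2def, Real.log_rpow hα0]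
    have hlogA3 : Real.log A3 = 3 * Real.log α := by rw [hA3def, Real.log_rpow hα0]
    have hr2 : ∀ x : ℝ, α ^ (2 * x) = A2 ^ x := fun x => by
      rw [hA2def, ← Real.rpow_mul hα0.le]
    have hr3 : ∀ x : ℝ, α ^ (3 * x) = A3 ^ x := fun x => by
      rw [hA3def, ← Real.rpow_mul hα0.le]
    have hf : Continuous (fun s : ℝ => α ^ (max s t + s + t) - (1/3) * α ^ (3 * max s t)) :=
      (cont_const_rpow hα0 (((continuous_id.max continuous_const).add continuous_id).add
        continuous_const)).sub (continuous_const.mul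
        (cont_const_rpow hα0 (continuous_const.mul (continuous_id.max continuous_const))))
    have heq : Set.EqOn (fun s : ℝ => α ^ t * A2 ^ s - (1/3) * A3 ^ s)
        (fun s : ℝ => α ^ (max s t + s + t) - (1/3) * α ^ (3 * max s t)) (Ioi t) := by
      intro s hs
      have hst : t < s := hs
      simp only
      rw [max_eq_left hst.le, ← hr2 s, ← hr3 s]
      have : s + s + t = 2 * s + t := by ring
      rw [this, Real.rpow_add hα0]
      ring
    have hint : IntegrableOn
        (fun s : ℝ => α ^ (max s t + s + t) - (1/3) * α ^ (3 * max s t)) (Ioi t) :=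
      IntegrableOn.congr_fun (((rpow_intOn_Ioi hA20 hA21 t).const_mul _).sub
        ((rpow_intOn_Ioi hA30 hA31 t).const_mul _)) heq measurableSet_Ioi
    rw [split_Ici ht hf hint]
    have hIoi : ∫ s in Ioi t, (α ^ (max s t + s + t) - (1/3) * α ^ (3 * max s t))
        = α ^ t * (-(A2 ^ t)/(2 * Real.log α)) + (1/3) * (A3 ^ t/(3 * Real.log α)) := by
      rw [← setIntegral_congr_fun measurableSet_Ioi heq, integral_sub
        (((rpow_intOn_Ioi hA20 hA21 t).const_mul _))
        (((rpow_intOn_Ioi hA30 hA31 t).const_mul _)),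
        integral_const_mul, integral_const_mul,
        integral_rpow_Ioi hA20 hA21, integral_rpow_Ioi hA30 hA31, hlogA2, hlogA3]
      ring
    have hIcc : ∫ s in (0:ℝ)..t, (α ^ (max s t + s + t) - (1/3) * α ^ (3 * max s t))
        = α ^ (2*t) * ((α ^ t - 1)/Real.log α) - (1/3) * α ^ (3*t) * t := by
      have h1 : ∫ s in (0:ℝ)..t, (α ^ (max s t + s + t) - (1/3) * α ^ (3 * max s t))
          = ∫ s in (0:ℝ)..t, (α ^ (2*t) * α ^ s - (1/3) * α ^ (3*t)) := by
        apply intervalIntegral.integral_congr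
        intro s hs
        rw [huIcc] at hs
        simp only [max_eq_right hs.2]
        have h2 : t + s + t = 2 * t + s := by ring
        rw [h2, Real.rpow_add hα0]
      have hci : Continuous (fun s : ℝ => α ^ (2*t) * α ^ s) :=
        continuous_const.mul (cont_const_rpow hα0 continuous_id)
      rw [h1, intervalIntegral.integral_sub (hci.intervalIntegrable 0 t)
        (intervalIntegrable_const),
        intervalIntegral.integral_const_mul, integral_rpow_ival hα0 hα1.ne,
        intervalIntegral.integral_const, Real.rpow_zero, smul_eq_mul]
      ring
    rw [hIoi, hIcc, hr2 t, hr3 t]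
    have h2t : A2 ^ t = α ^ t * α ^ t := by
      rw [← hr2 t, two_mul, Real.rpow_add hα0]
    have h3t : A3 ^ t = α ^ t * α ^ t * α ^ t := by
      rw [← hr3 t]
      have : 3 * t = t + t + t := by ring
      rw [this, Real.rpow_add hα0, Real.rpow_add hα0]
    rw [h2t, h3t]
    have hL : Real.log α ≠ 0 := hlogα.ne
    clear_value A2 A3
    clear hIoi hIcc heq hint hf hr2 hr3 hlogA2 hlogA3 hA21 hA31 hA20 hA30 h2t h3t hA2def hA3def huIcc
    generalize α ^ t = A
    generalize hg : Real.log α = L at hL ⊢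
    field_simp
    ring
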